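/- For any two discrete probability distributions D and D' on a countable set with equal support such that D_∞(D‖D') ≤ ε and D_∞(D'‖D) ≤ ε, the KL divergence satisfies D_KL(D‖D') ≤ ε·(e^ε − 1)/2. -/

import Mathlib

open scoped ENNReal

/-- The probability that a discrete distribution `P` assigns to a set `S`. -/
noncomputable def pmfProb {α : Type*} (P : PMF α) (S : Set α) : ℝ≥0∞ :=
  ∑' x, S.indicator (fun y => P y) x

/-- The (exponentiated) max divergence `exp (D_∞(P‖Q)) = sup_S P(S)/Q(S)`;
`D_∞(P‖Q) ≤ ε` is expressed as `DinfExp P Q ≤ ENNReal.ofReal (exp ε)`. -/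
noncomputable def DinfExp {α : Type*} (P Q : PMF α) : ℝ≥0∞ :=
  ⨆ S : Set α, pmfProb P S / pmfProb Q S

/-- The KL divergence `D_KL(P‖Q) = Σ_x P(x) ln (P(x)/Q(x))`. -/
noncomputable def KL {α : Type*} (P Q : PMF α) : ℝ :=
  ∑' x, (P x).toReal * Real.log ((P x).toReal / (Q x).toReal)

lemma pmfProb_singleton {α : Type*} (P : PMF α) (x : α) : pmfProb P {x} = P x := by
  unfold pmfProb
  rw [tsum_eq_single x]
  · simp
  · intro y hy
    exact Set.indicator_of_notMem (by simpa using hy) _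

lemma pointwise_bound {α : Type*} (P Q : PMF α) (ε : ℝ)
    (h : DinfExp P Q ≤ ENNReal.ofReal (Real.exp ε)) (x : α) :
    (P x).toReal ≤ Real.exp ε * (Q x).toReal := by
  have hx : P x / Q x ≤ ENNReal.ofReal (Real.exp ε) := by
    refine le_trans ?_ h
    have := le_iSup (fun S : Set α => pmfProb P S / pmfProb Q S) ({x} : Set α)
    simpa [pmfProb_singleton, DinfExp] using this
  have h2 : P x ≤ ENNReal.ofReal (Real.exp ε) * Q x := by
    rwa [ENNReal.div_le_iff_le_mul (Or.inr ENNReal.ofReal_ne_top)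
      (Or.inl (PMF.apply_ne_top Q x))] at hx
  calc (P x).toReal ≤ (ENNReal.ofReal (Real.exp ε) * Q x).toReal :=
        ENNReal.toReal_mono (ENNReal.mul_ne_top ENNReal.ofReal_ne_top (PMF.apply_ne_top Q x)) h2
    _ = Real.exp ε * (Q x).toReal := by
        rw [ENNReal.toReal_mul, ENNReal.toReal_ofReal (Real.exp_pos ε).le]

lemma chord (ε p q : ℝ) (hε : 0 < ε) (hp : 0 ≤ p) (hq : 0 ≤ q)
    (h1 : p ≤ Real.exp ε * q) (h2 : q ≤ Real.exp ε * p) :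
    p * Real.log (p / q) ≤
      (-ε * Real.exp (-ε) - ε * (Real.exp ε + Real.exp (-ε)) / (Real.exp ε - Real.exp (-ε))
        * Real.exp (-ε)) * q
      + ε * (Real.exp ε + Real.exp (-ε)) / (Real.exp ε - Real.exp (-ε)) * p := by
  set a := Real.exp (-ε) with ha_def
  set b := Real.exp ε with hb_def
  have ha : 0 < a := Real.exp_pos _
  have hb : 1 < b := by rw [hb_def]; exact Real.one_lt_exp_iff.mpr hε
  have hab : a < b := by
    rw [ha_def, hb_def]; exact Real.exp_lt_exp.mpr (by linarith)
  have hba : 0 < b - a := by linarith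
  rcases eq_or_lt_of_le hq with hq0 | hq0
  · have hp0 : p = 0 := le_antisymm (by nlinarith) hp
    simp [hp0, ← hq0]
  · have hp0 : 0 < p := by nlinarith
    set u := p / q with hu_def
    have hu_a : a ≤ u := by
      rw [hu_def, le_div_iff₀ hq0, ha_def, Real.exp_neg, ← hb_def]
      rw [inv_mul_le_iff₀ (by linarith)]
      linarith
    have hu_b : u ≤ b := by
      rw [hu_def, div_le_iff₀ hq0]; linarith
    set t := (b - u) / (b - a) with ht_def
    have ht0 : 0 ≤ t := div_nonneg (by linarith) hba.le
    have ht1 : 0 ≤ 1 - t := by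
      rw [ht_def]; rw [sub_nonneg, div_le_one hba]; linarith
    have hcomb : t • a + (1 - t) • b = u := by
      have hT : t * (b - a) = b - u := by rw [ht_def]; exact div_mul_cancel₀ _ hba.ne'
      field_simp [ht_def]; linear_combination (-1:ℝ) * hT
    have hconv := Real.convexOn_mul_log.2 (Set.mem_Ici.mpr ha.le)
      (Set.mem_Ici.mpr (by linarith : (0:ℝ) ≤ b)) ht0 ht1 (by ring)
    rw [hcomb] at hconv
    simp only [smul_eq_mul] at hconv
    have hla : Real.log a = -ε := Real.log_exp _
    have hlb : Real.log b = ε := Real.log_exp _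
    rw [hla, hlb] at hconv
    have hchord : t * (a * -ε) + (1 - t) * (b * ε) =
        (-ε * a - ε * (b + a) / (b - a) * a) + ε * (b + a) / (b - a) * u := by
      rw [ht_def]; field_simp; ring
    have hkey : u * Real.log u ≤
        (-ε * a - ε * (b + a) / (b - a) * a) + ε * (b + a) / (b - a) * u := by
      calc u * Real.log u ≤ t * (a * -ε) + (1 - t) * (b * ε) := hconv
        _ = _ := hchord
    have hstep : p * Real.log (p / q) = q * (u * Real.log u) := by
      rw [hu_def]; field_simp
    calc p * Real.log (p / q) = q * (u * Real.log u) := hstep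
      _ ≤ q * ((-ε * a - ε * (b + a) / (b - a) * a) + ε * (b + a) / (b - a) * u) :=
          mul_le_mul_of_nonneg_left hkey hq
      _ = (-ε * a - ε * (b + a) / (b - a) * a) * q + ε * (b + a) / (b - a) * p := by
          rw [hu_def]; field_simp

lemma final_alg (ε : ℝ) (hε : 0 < ε) :
    (-ε * Real.exp (-ε) - ε * (Real.exp ε + Real.exp (-ε)) / (Real.exp ε - Real.exp (-ε))
        * Real.exp (-ε)) + ε * (Real.exp ε + Real.exp (-ε)) / (Real.exp ε - Real.exp (-ε))
      ≤ ε * (Real.exp ε - 1) / 2 := by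
  set a := Real.exp (-ε) with ha_def
  set b := Real.exp ε with hb_def
  have ha : 0 < a := Real.exp_pos _
  have hb : 1 < b := Real.one_lt_exp_iff.mpr hε
  have hab : a * b = 1 := by
    rw [ha_def, hb_def, ← Real.exp_add]; simp
  have hba : 0 < b - a := by nlinarith
  have key : (-ε * a - ε * (b + a) / (b - a) * a) + ε * (b + a) / (b - a)
      = ε * (b - 1) / (b + 1) := by
    have hb1 : (0:ℝ) < b + 1 := by linarith
    field_simp
    linear_combination (-2*b) * hab
  rw [key]
  gcongr
  · nlinarith

lemma pmf_tsum_toReal {α : Type*} (P : PMF α) : ∑' x, (P x).toReal = 1 := by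
  rw [← ENNReal.tsum_toReal_eq (fun a => PMF.apply_ne_top P a), P.tsum_coe, ENNReal.toReal_one]

lemma pmf_summable_toReal {α : Type*} (P : PMF α) : Summable (fun x => (P x).toReal) := by
  apply ENNReal.summable_toReal
  rw [P.tsum_coe]
  exact ENNReal.one_ne_top

/-- **Sharp KL bound for bounded max divergence.** For any two discrete distributions
`D, D'` on a countable set with equal support such that `D_∞(D‖D') ≤ ε` and
`D_∞(D'‖D) ≤ ε`, the KL divergence satisfies `D_KL(D‖D') ≤ ε (e^ε − 1)/2`. -/
theorem kl_le_half {α : Type*} [Countable α] (D D' : PMF α) (ε : ℝ) (hε : 0 ≤ ε)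
    (hsupp : D.support = D'.support)
    (h1 : DinfExp D D' ≤ ENNReal.ofReal (Real.exp ε))
    (h2 : DinfExp D' D ≤ ENNReal.ofReal (Real.exp ε)) :
    KL D D' ≤ ε * (Real.exp ε - 1) / 2 := by
  set p : α → ℝ := fun x => (D x).toReal with hp_def
  set q : α → ℝ := fun x => (D' x).toReal with hq_def
  have hb1 : ∀ x, p x ≤ Real.exp ε * q x := pointwise_bound D D' ε h1
  have hb2 : ∀ x, q x ≤ Real.exp ε * p x := pointwise_bound D' D ε h2
  have hp0 : ∀ x, 0 ≤ p x := fun x => ENNReal.toReal_nonneg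
  have hq0 : ∀ x, 0 ≤ q x := fun x => ENNReal.toReal_nonneg
  rcases eq_or_lt_of_le hε with hε0 | hε0
  · -- ε = 0 : P = Q, KL = 0
    have heq : ∀ x, p x = q x := by
      intro x
      have ha := hb1 x; have hbx := hb2 x
      rw [← hε0, Real.exp_zero, one_mul] at ha hbx
      linarith
    have hKL0 : KL D D' = 0 := by
      unfold KL
      calc ∑' x, (D x).toReal * Real.log ((D x).toReal / (D' x).toReal)
          = ∑' _x : α, (0:ℝ) := by
            refine tsum_congr fun x => ?_
            rcases eq_or_lt_of_le (hp0 x) with h | h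
            · show p x * _ = 0
              rw [← h, zero_mul]
            · show p x * Real.log (p x / q x) = 0
              rw [← heq x, div_self h.ne', Real.log_one, mul_zero]
        _ = 0 := tsum_zero
    rw [hKL0, ← hε0]
    simp
  · -- ε > 0
    set A := -ε * Real.exp (-ε) - ε * (Real.exp ε + Real.exp (-ε)) /
        (Real.exp ε - Real.exp (-ε)) * Real.exp (-ε) with hA_def
    set B := ε * (Real.exp ε + Real.exp (-ε)) / (Real.exp ε - Real.exp (-ε)) with hB_def
    have hpt : ∀ x, p x * Real.log (p x / q x) ≤ A * q x + B * p x :=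
      fun x => chord ε (p x) (q x) hε0 (hp0 x) (hq0 x) (hb1 x) (hb2 x)
    -- summability of LHS
    have habs : ∀ x, |p x * Real.log (p x / q x)| ≤ ε * p x := by
      intro x
      rcases eq_or_lt_of_le (hp0 x) with h | h
      · simp [← h]
      · have hqx : 0 < q x := by nlinarith [hb1 x, Real.exp_pos ε]
        have hu : Real.exp (-ε) ≤ p x / q x := by
          rw [le_div_iff₀ hqx, Real.exp_neg, inv_mul_le_iff₀ (Real.exp_pos ε)]
          exact hb2 x
        have hu' : p x / q x ≤ Real.exp ε := by
          rw [div_le_iff₀ hqx]; exact hb1 x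
        have hlog : |Real.log (p x / q x)| ≤ ε := by
          rw [abs_le]
          constructor
          · calc -ε = Real.log (Real.exp (-ε)) := (Real.log_exp _).symm
              _ ≤ _ := Real.log_le_log (Real.exp_pos _) hu
          · calc Real.log (p x / q x) ≤ Real.log (Real.exp ε) :=
                Real.log_le_log (by positivity) hu'
              _ = ε := Real.log_exp _
        rw [abs_mul, abs_of_nonneg (hp0 x)]
        calc p x * |Real.log (p x / q x)| ≤ p x * ε :=
              mul_le_mul_of_nonneg_left hlog (hp0 x)
          _ = ε * p x := mul_comm _ _
    have hsumL : Summable (fun x => p x * Real.log (p x / q x)) := by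
      apply Summable.of_abs
      exact Summable.of_nonneg_of_le (fun x => abs_nonneg _) habs
        ((pmf_summable_toReal D).mul_left ε)
    have hsumR : Summable (fun x => A * q x + B * p x) :=
      ((pmf_summable_toReal D').mul_left A).add ((pmf_summable_toReal D).mul_left B)
    have hKL : KL D D' ≤ ∑' x, (A * q x + B * p x) := by
      unfold KL
      exact Summable.tsum_le_tsum hpt hsumL hsumR
    have htsum : ∑' x, (A * q x + B * p x) = A + B := by
      rw [Summable.tsum_add ((pmf_summable_toReal D').mul_left A) ((pmf_summable_toReal D).mul_left B),
        tsum_mul_left, tsum_mul_left, pmf_tsum_toReal, pmf_tsum_toReal, mul_one, mul_one]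
    calc KL D D' ≤ A + B := htsum ▸ hKL
      _ ≤ ε * (Real.exp ε - 1) / 2 := final_alg ε hε0
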